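/- arXiv:1804.03982 — 5 statements merged into one kernel-verified Lean document; each statement's English description precedes it below -/
import Mathlib

section
/- Fix nonnegative integers k₁ and k₂. Define S(N) = ∑_{m=0}^{N} binomial(2N+k₁+k₂, 2m+k₁) · binomial(2m+k₁, m) · binomial(2(N−m)+k₂, N−m). Then S satisfies the recurrence S(N+1) = [(2N+k₁+k₂+1)²(2N+k₁+k₂+2)²] / [(N+1)(N+k₁+1)(N+k₂+1)(N+k₁+k₂+1)] · S(N). -/
open Finset

/-- Vandermonde's identity in range form. -/
lemma binom_sum_rec_vdm (N a b : ℕ) :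
    ∑ m ∈ Finset.range (N+1), N.choose m * (N+a+b).choose (m+a)
      = (2*N+a+b).choose (N+a) := by
  rw [show 2*N+a+b = N + (N+a+b) by ring, Nat.add_choose_eq,
    Finset.Nat.sum_antidiagonal_eq_sum_range_succ_mk]
  have h1 : ∑ m ∈ Finset.range (N+1), N.choose m * (N+a+b).choose (m+a)
      = ∑ m ∈ Finset.range (N+1), N.choose (N-m) * (N+a+b).choose (N+a-(N-m)) := by
    refine Finset.sum_congr rfl fun m hm => ?_
    have hm' : m ≤ N := Finset.mem_range_succ_iff.mp hm
    rw [Nat.choose_symm hm', show N+a-(N-m) = m+a by omega]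
  rw [h1]
  have h2 := Finset.sum_range_reflect (fun i => N.choose i * (N+a+b).choose (N+a-i)) (N+1)
  simp only [show ∀ m, N+1-1-m = N-m from fun m => by omega] at h2
  rw [h2]
  apply Finset.sum_subset (Finset.range_subset_range.mpr (by omega))
  intro x hx hx'
  have : N < x := by simp only [Finset.mem_range] at hx hx'; omega
  simp [Nat.choose_eq_zero_of_lt this]

/-- Termwise multinomial identity. -/
lemma binom_sum_rec_term (k₁ k₂ m N : ℕ) (h : m ≤ N) :
    ((2*N+k₁+k₂).choose (2*m+k₁) * (2*m+k₁).choose m * (2*(N-m)+k₂).choose (N-m) : ℚ)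
      = (2*N+k₁+k₂).choose N * (N.choose m * (N+k₁+k₂).choose (m+k₁)) := by
  rw [Nat.cast_choose ℚ (show 2*m+k₁ ≤ 2*N+k₁+k₂ by omega),
      Nat.cast_choose ℚ (show m ≤ 2*m+k₁ by omega),
      Nat.cast_choose ℚ (show N-m ≤ 2*(N-m)+k₂ by omega),
      Nat.cast_choose ℚ (show N ≤ 2*N+k₁+k₂ by omega),
      Nat.cast_choose ℚ (show m ≤ N from h),
      Nat.cast_choose ℚ (show m+k₁ ≤ N+k₁+k₂ by omega),
      show 2*N+k₁+k₂ - (2*m+k₁) = 2*(N-m)+k₂ by omega,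
      show 2*m+k₁ - m = m+k₁ by omega,
      show 2*(N-m)+k₂ - (N-m) = N-m+k₂ by omega,
      show 2*N+k₁+k₂ - N = N+k₁+k₂ by omega,
      show N+k₁+k₂ - (m+k₁) = N-m+k₂ by omega]
  have f1 : ((2*m+k₁).factorial : ℚ) ≠ 0 := Nat.cast_ne_zero.mpr (Nat.factorial_ne_zero _)
  have f2 : ((2*(N-m)+k₂).factorial : ℚ) ≠ 0 := Nat.cast_ne_zero.mpr (Nat.factorial_ne_zero _)
  have f3 : (m.factorial : ℚ) ≠ 0 := Nat.cast_ne_zero.mpr (Nat.factorial_ne_zero _)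
  have f4 : ((m+k₁).factorial : ℚ) ≠ 0 := Nat.cast_ne_zero.mpr (Nat.factorial_ne_zero _)
  have f5 : ((N-m).factorial : ℚ) ≠ 0 := Nat.cast_ne_zero.mpr (Nat.factorial_ne_zero _)
  have f6 : ((N-m+k₂).factorial : ℚ) ≠ 0 := Nat.cast_ne_zero.mpr (Nat.factorial_ne_zero _)
  have f7 : (N.factorial : ℚ) ≠ 0 := Nat.cast_ne_zero.mpr (Nat.factorial_ne_zero _)
  have f8 : ((N+k₁+k₂).factorial : ℚ) ≠ 0 := Nat.cast_ne_zero.mpr (Nat.factorial_ne_zero _)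
  field_simp

/-- Closed form for the sum. -/
lemma binom_sum_rec_closed (k₁ k₂ N : ℕ) :
    (∑ m ∈ Finset.range (N+1),
        ((2*N+k₁+k₂).choose (2*m+k₁) * (2*m+k₁).choose m
          * (2*(N-m)+k₂).choose (N-m) : ℚ))
      = (2*N+k₁+k₂).choose N * (2*N+k₁+k₂).choose (N+k₁) := by
  rw [Finset.sum_congr rfl fun m hm =>
    binom_sum_rec_term k₁ k₂ m N (Finset.mem_range_succ_iff.mp hm), ← Finset.mul_sum]
  congr 1
  rw [← binom_sum_rec_vdm N k₁ k₂]
  push_cast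
  rfl

/-- The ratio identity for the closed forms. -/
lemma binom_sum_rec_step (k₁ k₂ N : ℕ) :
    ((2*(N+1)+k₁+k₂).choose (N+1) * (2*(N+1)+k₁+k₂).choose (N+1+k₁) : ℚ)
      = ((2 * N + k₁ + k₂ + 1 : ℚ) ^ 2 * (2 * N + k₁ + k₂ + 2 : ℚ) ^ 2) /
          ((N + 1 : ℚ) * (N + k₁ + 1 : ℚ) * (N + k₂ + 1 : ℚ) * (N + k₁ + k₂ + 1 : ℚ)) *
        ((2*N+k₁+k₂).choose N * (2*N+k₁+k₂).choose (N+k₁)) := by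
  rw [Nat.cast_choose ℚ (show N+1 ≤ 2*(N+1)+k₁+k₂ by omega),
      Nat.cast_choose ℚ (show N+1+k₁ ≤ 2*(N+1)+k₁+k₂ by omega),
      Nat.cast_choose ℚ (show N ≤ 2*N+k₁+k₂ by omega),
      Nat.cast_choose ℚ (show N+k₁ ≤ 2*N+k₁+k₂ by omega),
      show 2*(N+1)+k₁+k₂ - (N+1) = N+k₁+k₂+1 by omega,
      show 2*(N+1)+k₁+k₂ - (N+1+k₁) = N+k₂+1 by omega,
      show 2*N+k₁+k₂ - N = N+k₁+k₂ by omega,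
      show 2*N+k₁+k₂ - (N+k₁) = N+k₂ by omega,
      show 2*(N+1)+k₁+k₂ = 2*N+k₁+k₂+1+1 by ring,
      show N+1+k₁ = N+k₁+1 by ring]
  simp only [Nat.factorial_succ]
  have f1 : ((2*N+k₁+k₂).factorial : ℚ) ≠ 0 := Nat.cast_ne_zero.mpr (Nat.factorial_ne_zero _)
  have f2 : (N.factorial : ℚ) ≠ 0 := Nat.cast_ne_zero.mpr (Nat.factorial_ne_zero _)
  have f3 : ((N+k₁+k₂).factorial : ℚ) ≠ 0 := Nat.cast_ne_zero.mpr (Nat.factorial_ne_zero _)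
  have f4 : ((N+k₁).factorial : ℚ) ≠ 0 := Nat.cast_ne_zero.mpr (Nat.factorial_ne_zero _)
  have f5 : ((N+k₂).factorial : ℚ) ≠ 0 := Nat.cast_ne_zero.mpr (Nat.factorial_ne_zero _)
  have g1 : (N:ℚ) + 1 ≠ 0 := by positivity
  have g2 : (N:ℚ) + k₁ + 1 ≠ 0 := by positivity
  have g3 : (N:ℚ) + k₂ + 1 ≠ 0 := by positivity
  have g4 : (N:ℚ) + k₁ + k₂ + 1 ≠ 0 := by positivity
  push_cast
  field_simp
  ring

theorem binom_sum_recurrence (k₁ k₂ : ℕ) (N : ℕ) :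
    (∑ m ∈ Finset.range (N + 1 + 1),
        ((2 * (N + 1) + k₁ + k₂).choose (2 * m + k₁) *
          (2 * m + k₁).choose m * (2 * ((N + 1) - m) + k₂).choose ((N + 1) - m) : ℚ)) =
      ((2 * N + k₁ + k₂ + 1 : ℚ) ^ 2 * (2 * N + k₁ + k₂ + 2 : ℚ) ^ 2) /
          ((N + 1 : ℚ) * (N + k₁ + 1 : ℚ) * (N + k₂ + 1 : ℚ) * (N + k₁ + k₂ + 1 : ℚ)) *
        (∑ m ∈ Finset.range (N + 1),
          ((2 * N + k₁ + k₂).choose (2 * m + k₁) *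
            (2 * m + k₁).choose m * (2 * (N - m) + k₂).choose (N - m) : ℚ)) := by
  rw [binom_sum_rec_closed k₁ k₂ (N+1), binom_sum_rec_closed k₁ k₂ N]
  exact binom_sum_rec_step k₁ k₂ N
end

section
/- Let k₁, k₂ be nonnegative integers and N a nonnegative integer, and set l = 2N + k₁ + k₂. Then ∫₀^π ∫₀^π (cos θ₁ + cos θ₂)^l cos(k₁θ₁) cos(k₂θ₂) dθ₁ dθ₂ = binomial(k₁+k₂, k₁) · (π²/2^l) · (k₁+k₂+1)_{2N}² / [(k₁+1)_N (k₂+1)_N (k₁+k₂+1)_N N!]. -/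
open Real intervalIntegral

/-- The rising factorial (Pochhammer symbol) over ℝ. -/
noncomputable def rising (a : ℝ) (n : ℕ) : ℝ := (ascPochhammer ℝ n).eval a


lemma int_cos_nat (k : ℕ) : (∫ θ in (0:ℝ)..π, Real.cos (k * θ)) = if k = 0 then π else 0 := by
  rcases Nat.eq_zero_or_pos k with hk | hk
  · simp [hk, pi_pos.le]
  · have hk' : (k:ℝ) ≠ 0 := by positivity
    rw [if_neg hk.ne']
    have := intervalIntegral.integral_comp_mul_left (fun x => Real.cos x) hk' (a := 0) (b := π)
    simp only [mul_zero] at this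
    rw [this, integral_cos]
    simp [Real.sin_nat_mul_pi]

noncomputable def J (m k : ℕ) : ℝ := ∫ θ in (0:ℝ)..π, Real.cos θ ^ m * Real.cos (k * θ)

lemma J_zero (k : ℕ) : J 0 k = if k = 0 then π else 0 := by
  simp only [J, pow_zero, one_mul]; exact int_cos_nat k

lemma J_succ_zero (m : ℕ) : J (m+1) 0 = J m 1 := by
  unfold J
  apply intervalIntegral.integral_congr
  intro θ _
  simp [pow_succ, mul_comm]

lemma J_succ (m k : ℕ) : J (m+1) (k+1) = (J m (k+2) + J m k)/2 := by
  unfold J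
  have h : ∀ θ : ℝ, Real.cos θ ^ (m+1) * Real.cos ((k+1) * θ) =
      (Real.cos θ ^ m * Real.cos ((k+2) * θ) + Real.cos θ ^ m * Real.cos (k * θ))/2 := by
    intro θ
    have := Real.cos_add_cos ((k+2 : ℕ) * θ) ((k:ℕ) * θ)
    have e1 : (((k:ℕ)+2) * θ + (k:ℕ) * θ)/2 = ((k:ℕ)+1) * θ := by ring
    have e2 : (((k:ℕ)+2) * θ - (k:ℕ) * θ)/2 = θ := by ring
    push_cast at this ⊢
    rw [e1, e2] at this
    rw [← mul_add, this]
    ring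
  push_cast
  simp only [h]
  rw [intervalIntegral.integral_div]
  rw [intervalIntegral.integral_add ((by fun_prop : Continuous fun x : ℝ => Real.cos x ^ m * Real.cos ((k+2 : ℝ) * x)).intervalIntegrable _ _) ((by fun_prop : Continuous fun x : ℝ => Real.cos x ^ m * Real.cos ((k : ℝ) * x)).intervalIntegrable _ _)]

lemma J_eq (m k : ℕ) : J m k =
    if k ≤ m ∧ (m - k) % 2 = 0 then π / 2^m * (m.choose ((m-k)/2) : ℝ) else 0 := by
  induction m generalizing k with
  | zero =>
    rw [J_zero]
    rcases Nat.eq_zero_or_pos k with h | h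
    · simp [h]
    · rw [if_neg h.ne', if_neg (by omega)]
  | succ m ih =>
    cases k with
    | zero =>
      rw [J_succ_zero, ih 1]
      by_cases hm : 1 ≤ m ∧ (m - 1) % 2 = 0
      · rw [if_pos hm, if_pos (by omega)]
        obtain ⟨t, ht⟩ : ∃ t, m = 2*t+1 := ⟨(m-1)/2, by omega⟩
        subst ht
        have h1 : (2*t+1-1)/2 = t := by omega
        have h2 : (2*t+1+1-0)/2 = t+1 := by omega
        rw [h1, h2]
        have : (2*t+1+1).choose (t+1) = (2*t+1).choose t + (2*t+1).choose (t+1) :=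
          Nat.choose_succ_succ' (2*t+1) t
        have hsym : (2*t+1).choose (t+1) = (2*t+1).choose t := by
          rw [← Nat.choose_symm (by omega)]
          congr 1
          omega
        rw [this, hsym]
        push_cast
        ring
      · rw [if_neg hm, if_neg (by omega)]
    | succ k' =>
      rw [J_succ, ih (k'+2), ih k']
      by_cases hC : k' ≤ m ∧ (m - k') % 2 = 0
      · by_cases hA : k' + 2 ≤ m
        · obtain ⟨s, hs⟩ : ∃ s, m = k' + 2*s + 2 := ⟨(m - k' - 2)/2, by omega⟩
          subst hs
          rw [if_pos (by omega), if_pos (by omega), if_pos (by omega)]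
          have e1 : (k' + 2*s + 2 - (k'+2))/2 = s := by omega
          have e2 : (k' + 2*s + 2 - k')/2 = s + 1 := by omega
          have e3 : (k' + 2*s + 2 + 1 - (k'+1))/2 = s + 1 := by omega
          rw [e1, e2, e3]
          have hp : (k' + 2*s + 2 + 1).choose (s+1)
              = (k' + 2*s + 2).choose s + (k' + 2*s + 2).choose (s+1) :=
            Nat.choose_succ_succ' _ _
          rw [hp]
          push_cast
          ring
        · have hm : m = k' := by omega
          rw [if_neg (by omega), if_pos (by omega), if_pos (by omega)]
          have e2 : (m - k')/2 = 0 := by omega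
          have e3 : (m + 1 - (k'+1))/2 = 0 := by omega
          rw [e2, e3, Nat.choose_zero_right, Nat.choose_zero_right]
          subst hm
          push_cast
          ring
      · rw [if_neg (by omega), if_neg (by omega), if_neg (by omega)]
        norm_num

lemma inner_eq_sum (k₂ l : ℕ) (c A : ℝ) :
    (∫ θ₂ in (0:ℝ)..π, (c + Real.cos θ₂)^l * A * Real.cos (k₂ * θ₂))
    = ∑ j ∈ Finset.range (l+1), (l.choose j : ℝ) * c^j * A * J (l-j) k₂ := by
  have h : ∀ θ₂ : ℝ, (c + Real.cos θ₂)^l * A * Real.cos (k₂ * θ₂)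
      = ∑ j ∈ Finset.range (l+1),
        ((l.choose j : ℝ) * c^j * A) * (Real.cos θ₂ ^ (l-j) * Real.cos (k₂ * θ₂)) := by
    intro θ₂
    rw [add_pow]
    rw [Finset.sum_mul, Finset.sum_mul]
    apply Finset.sum_congr rfl
    intro j _
    ring
  rw [intervalIntegral.integral_congr (fun θ₂ _ => h θ₂)]
  rw [intervalIntegral.integral_finset_sum]
  · apply Finset.sum_congr rfl
    intro j _
    rw [intervalIntegral.integral_const_mul]
    rfl
  · intro j _
    apply Continuous.intervalIntegrable
    fun_prop

lemma double_eq_sum (k₁ k₂ l : ℕ) :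
    (∫ θ₁ in (0:ℝ)..π, ∫ θ₂ in (0:ℝ)..π,
        (Real.cos θ₁ + Real.cos θ₂)^l * Real.cos (k₁ * θ₁) * Real.cos (k₂ * θ₂))
    = ∑ j ∈ Finset.range (l+1), (l.choose j : ℝ) * J j k₁ * J (l-j) k₂ := by
  have h : ∀ θ₁ : ℝ, (∫ θ₂ in (0:ℝ)..π,
      (Real.cos θ₁ + Real.cos θ₂)^l * Real.cos (k₁ * θ₁) * Real.cos (k₂ * θ₂))
      = ∑ j ∈ Finset.range (l+1),
        ((l.choose j : ℝ) * J (l-j) k₂) * (Real.cos θ₁ ^ j * Real.cos (k₁ * θ₁)) := by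
    intro θ₁
    rw [inner_eq_sum k₂ l (Real.cos θ₁) (Real.cos (k₁ * θ₁))]
    apply Finset.sum_congr rfl
    intro j _
    ring
  rw [intervalIntegral.integral_congr (fun θ₁ _ => h θ₁)]
  rw [intervalIntegral.integral_finset_sum]
  · apply Finset.sum_congr rfl
    intro j _
    rw [intervalIntegral.integral_const_mul]
    show _ * J j k₁ = _
    ring
  · intro j _
    apply Continuous.intervalIntegrable
    fun_prop

lemma vand (k₁ N M : ℕ) :
    ∑ a ∈ Finset.range (N+1), N.choose a * M.choose (k₁+a) = (N+M).choose (k₁+N) := by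
  rw [Nat.add_choose_eq, Finset.Nat.sum_antidiagonal_eq_sum_range_succ_mk]
  simp only []
  symm
  rw [show (k₁ + N).succ = (N+1) + k₁ by omega, Finset.sum_range_add]
  have h2 : ∀ i ∈ Finset.range k₁, N.choose (N+1+i) * M.choose (k₁+N-(N+1+i)) = 0 := by
    intro i _
    rw [Nat.choose_eq_zero_of_lt (by omega), zero_mul]
  rw [Finset.sum_congr rfl h2, Finset.sum_const, smul_zero, add_zero]
  rw [← Finset.sum_range_reflect]
  apply Finset.sum_congr rfl
  intro a ha
  simp only [Finset.mem_range] at ha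
  have e1 : N + 1 - 1 - a = N - a := by omega
  have e2 : k₁ + N - (N - a) = k₁ + a := by omega
  rw [e1, e2, Nat.choose_symm (by omega)]

lemma term_eq (k₁ k₂ a b : ℕ) :
    ((2*(a+b)+k₁+k₂).choose (k₁+2*a) * (k₁+2*a).choose a * (k₂+2*b).choose b : ℝ)
    * ((a+b).factorial * (k₁+k₂+(a+b)).factorial)
    = (2*(a+b)+k₁+k₂).factorial *
      (((a+b).choose a : ℝ) * ((k₁+k₂+(a+b)).choose (k₁+a) : ℝ)) := by
  have h1 := Nat.cast_choose ℝ (show k₁+2*a ≤ 2*(a+b)+k₁+k₂ by omega)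
  rw [show 2*(a+b)+k₁+k₂ - (k₁+2*a) = k₂+2*b by omega] at h1
  have h2 := Nat.cast_choose ℝ (show a ≤ k₁+2*a by omega)
  rw [show k₁+2*a - a = k₁+a by omega] at h2
  have h3 := Nat.cast_choose ℝ (show b ≤ k₂+2*b by omega)
  rw [show k₂+2*b - b = k₂+b by omega] at h3
  have h4 := Nat.cast_choose ℝ (show a ≤ a+b by omega)
  rw [show a+b - a = b by omega] at h4
  have h5 := Nat.cast_choose ℝ (show k₁+a ≤ k₁+k₂+(a+b) by omega)
  rw [show k₁+k₂+(a+b) - (k₁+a) = k₂+b by omega] at h5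
  rw [h1, h2, h3, h4, h5]
  have q : ∀ n : ℕ, (n.factorial : ℝ) ≠ 0 := fun n => Nat.cast_ne_zero.mpr n.factorial_ne_zero
  field_simp

lemma sum_reduce (k₁ k₂ N : ℕ) :
    ∑ j ∈ Finset.range (2*N+k₁+k₂+1),
      ((2*N+k₁+k₂).choose j : ℝ) * J j k₁ * J (2*N+k₁+k₂-j) k₂
    = π^2/2^(2*N+k₁+k₂) * ∑ a ∈ Finset.range (N+1),
        (((2*N+k₁+k₂).choose (k₁+2*a) : ℝ) * ((k₁+2*a).choose a : ℝ)
          * ((k₂+2*(N-a)).choose (N-a) : ℝ)) := by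
  set l := 2*N+k₁+k₂ with hl
  set f : ℕ → ℝ := fun j => ((l.choose j : ℝ) * J j k₁ * J (l-j) k₂) with hf
  have himg : Finset.image (fun a => k₁+2*a) (Finset.range (N+1)) ⊆ Finset.range (l+1) := by
    intro j hj
    obtain ⟨a, ha, rfl⟩ := Finset.mem_image.mp hj
    simp only [Finset.mem_range] at ha ⊢
    omega
  have hz : ∀ j ∈ Finset.range (l+1),
      j ∉ Finset.image (fun a => k₁+2*a) (Finset.range (N+1)) → f j = 0 := by
    intro j hj hjim
    simp only [Finset.mem_range] at hj
    by_cases hk : k₁ ≤ j ∧ (j - k₁) % 2 = 0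
    · have haN : ¬ (j - k₁)/2 ≤ N := by
        intro h
        exact hjim (Finset.mem_image.mpr ⟨(j-k₁)/2, Finset.mem_range.mpr (by omega), by omega⟩)
      have : ¬ (k₂ ≤ l - j ∧ (l - j - k₂) % 2 = 0) := by omega
      simp only [hf, J_eq (l-j) k₂, if_neg this, mul_zero]
    · simp only [hf, J_eq j k₁, if_neg hk, mul_zero, zero_mul]
  rw [← Finset.sum_subset himg hz]
  rw [Finset.sum_image (by intro a _ b _ h; simp only at h; omega)]
  rw [Finset.mul_sum]
  apply Finset.sum_congr rfl
  intro a ha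
  simp only [Finset.mem_range] at ha
  have haN : a ≤ N := by omega
  simp only [hf]
  rw [show l - (k₁+2*a) = k₂+2*(N-a) by omega]
  rw [J_eq, J_eq]
  rw [if_pos (by omega), if_pos (by omega)]
  rw [show (k₁+2*a-k₁)/2 = a by omega, show (k₂+2*(N-a)-k₂)/2 = N-a by omega]
  have hpow : (2:ℝ)^(k₁+2*a) * 2^(k₂+2*(N-a)) = 2^l := by
    rw [← pow_add]; congr 1; omega
  have h2 : ∀ n : ℕ, ((2:ℝ))^n ≠ 0 := fun n => by positivity
  field_simp
  rw [← hpow]; ring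

lemma rising_eq (K n : ℕ) : rising ((K:ℝ)+1) n = ((K+n).factorial : ℝ) / (K.factorial : ℝ) := by
  have hc : ((K:ℝ)+1) = (((K+1 : ℕ) : ℕ) : ℝ) := by push_cast; ring
  rw [rising, hc, ← ascPochhammer_eval_cast, ascPochhammer_nat_eq_ascFactorial]
  rw [eq_div_iff (Nat.cast_ne_zero.mpr K.factorial_ne_zero)]
  rw [← Nat.cast_mul, mul_comm, Nat.factorial_mul_ascFactorial]

theorem A_l_value (k₁ k₂ N : ℕ) :
    (∫ θ₁ in (0:ℝ)..π, ∫ θ₂ in (0:ℝ)..π,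
        (Real.cos θ₁ + Real.cos θ₂) ^ (2 * N + k₁ + k₂) *
          Real.cos (k₁ * θ₁) * Real.cos (k₂ * θ₂)) =
      ((k₁ + k₂).choose k₁ : ℝ) * (π ^ 2 / 2 ^ (2 * N + k₁ + k₂)) *
        (rising (k₁ + k₂ + 1) (2 * N)) ^ 2 /
          (rising (k₁ + 1) N * rising (k₂ + 1) N * rising (k₁ + k₂ + 1) N *
            (Nat.factorial N : ℝ)) := by
  rw [double_eq_sum k₁ k₂ (2*N+k₁+k₂), sum_reduce k₁ k₂ N]
  -- evaluate the sum
  have hterm : ∀ a ∈ Finset.range (N+1),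
      (((2*N+k₁+k₂).choose (k₁+2*a) : ℝ) * ((k₁+2*a).choose a : ℝ)
          * ((k₂+2*(N-a)).choose (N-a) : ℝ))
      = ((2*N+k₁+k₂).factorial : ℝ) * ((N.choose a : ℝ) * ((k₁+k₂+N).choose (k₁+a) : ℝ))
        / ((N.factorial : ℝ) * ((k₁+k₂+N).factorial : ℝ)) := by
    intro a ha
    simp only [Finset.mem_range] at ha
    have h := term_eq k₁ k₂ a (N-a)
    rw [show a + (N-a) = N by omega] at h
    rw [eq_div_iff (by positivity)]
    exact h
  rw [Finset.sum_congr rfl hterm, ← Finset.sum_div, ← Finset.mul_sum]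
  have hv : (∑ a ∈ Finset.range (N+1), ((N.choose a : ℝ) * ((k₁+k₂+N).choose (k₁+a) : ℝ)))
      = ((N+(k₁+k₂+N)).choose (k₁+N) : ℝ) := by
    exact_mod_cast congrArg (Nat.cast : ℕ → ℝ) (vand k₁ N (k₁+k₂+N))
  rw [hv]
  -- rising factorials
  have r1 : rising ((k₁ : ℝ) + (k₂ : ℝ) + 1) (2*N)
      = (((k₁+k₂)+2*N).factorial : ℝ) / ((k₁+k₂).factorial : ℝ) := by
    have : ((k₁ : ℝ) + (k₂ : ℝ)) = (((k₁+k₂ : ℕ)) : ℝ) := by push_cast; ring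
    rw [this, rising_eq]
  have r2 : rising ((k₁ : ℝ) + 1) N = ((k₁+N).factorial : ℝ) / (k₁.factorial : ℝ) := rising_eq k₁ N
  have r3 : rising ((k₂ : ℝ) + 1) N = ((k₂+N).factorial : ℝ) / (k₂.factorial : ℝ) := rising_eq k₂ N
  have r4 : rising ((k₁ : ℝ) + (k₂ : ℝ) + 1) N
      = (((k₁+k₂)+N).factorial : ℝ) / ((k₁+k₂).factorial : ℝ) := by
    have : ((k₁ : ℝ) + (k₂ : ℝ)) = (((k₁+k₂ : ℕ)) : ℝ) := by push_cast; ring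
    rw [this, rising_eq]
  rw [r1, r2, r3, r4]
  -- choose to factorials
  have c1 : (((k₁+k₂)).choose k₁ : ℝ) = ((k₁+k₂).factorial : ℝ)
      / ((k₁.factorial : ℝ) * (k₂.factorial : ℝ)) := by
    have h := Nat.cast_choose ℝ (show k₁ ≤ k₁+k₂ by omega)
    rw [show k₁+k₂-k₁ = k₂ by omega] at h
    exact h
  have c2 : ((N+(k₁+k₂+N)).choose (k₁+N) : ℝ) = ((N+(k₁+k₂+N)).factorial : ℝ)
      / (((k₁+N).factorial : ℝ) * ((k₂+N).factorial : ℝ)) := by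
    have h := Nat.cast_choose ℝ (show k₁+N ≤ N+(k₁+k₂+N) by omega)
    rw [show N+(k₁+k₂+N) - (k₁+N) = k₂+N by omega] at h
    exact h
  rw [c1, c2, show N+(k₁+k₂+N) = 2*N+k₁+k₂ by omega]
  rw [show (k₁+k₂)+2*N = 2*N+k₁+k₂ by omega, show (k₁+k₂)+N = k₁+k₂+N by omega]
  have q : ∀ n : ℕ, (n.factorial : ℝ) ≠ 0 := fun n => Nat.cast_ne_zero.mpr n.factorial_ne_zero
  have h2 : ((2:ℝ))^(2*N+k₁+k₂) ≠ 0 := by positivity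
  field_simp
end

section
/- For 0 ≤ x < 1 and a nonnegative integer k, the function Ξ₁^{[k]}(x) has the power series expansion Ξ₁^{[k]}(x) = (1/2) ∑_{m=0}^∞ (1/2)_m (1/2)_{m+k} / (m! (m+k)!) · x^{2m+k}. -/
open Real

/-- The rank-1 Melnikov function Ξ₁^{[k]}. -/
noncomputable def Xi1 (k : ℕ) (x : ℝ) : ℝ :=
  (1 / (2 * π)) * ∫ θ in (0:ℝ)..π, Real.cos (k * θ) / Real.sqrt (1 + x ^ 2 - 2 * x * Real.cos θ)

noncomputable def al (n : ℕ) : ℝ := rising (1/2) n / n.factorial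


lemma rising_succ (a : ℝ) (n : ℕ) : rising a (n+1) = rising a n * (a + n) := by
  unfold rising
  rw [ascPochhammer_succ_right]
  simp [Polynomial.eval_mul]

lemma al_zero : al 0 = 1 := by simp [al, rising]

lemma al_succ (n : ℕ) : al (n+1) = al n * ((2*n+1) / (2*(n+1))) := by
  unfold al
  rw [rising_succ, Nat.factorial_succ]
  have h1 : ((n:ℝ)+1) ≠ 0 := by positivity
  have h2 : (n.factorial : ℝ) ≠ 0 := Nat.cast_ne_zero.2 n.factorial_ne_zero
  push_cast
  field_simp
  ring

lemma al_nonneg (n : ℕ) : 0 ≤ al n := by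
  induction n with
  | zero => rw [al_zero]; norm_num
  | succ n ih => rw [al_succ]; positivity

lemma al_le_one (n : ℕ) : al n ≤ 1 := by
  induction n with
  | zero => rw [al_zero]
  | succ n ih =>
    rw [al_succ]
    have h : (2*(n:ℝ)+1) / (2*((n:ℝ)+1)) ≤ 1 := by
      rw [div_le_one (by positivity)]; linarith
    calc al n * ((2*(n:ℝ)+1)/(2*((n:ℝ)+1))) ≤ 1 * 1 :=
          mul_le_mul ih h (by positivity) zero_le_one
      _ = 1 := mul_one 1

lemma al_rec (n : ℕ) : 2*((n:ℝ)+1) * al (n+1) = (2*(n:ℝ)+1) * al n := by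
  rw [al_succ]
  have h1 : ((n:ℝ)+1) ≠ 0 := by positivity
  field_simp

lemma conv (n : ℕ) : ∑ p ∈ Finset.HasAntidiagonal.antidiagonal n, al p.1 * al p.2 = 1 := by
  induction n with
  | zero => simp [al_zero]
  | succ n ih =>
    have key : ∀ m : ℕ, (m : ℝ) * (∑ p ∈ Finset.HasAntidiagonal.antidiagonal m, al p.1 * al p.2)
        = 2 * ∑ p ∈ Finset.HasAntidiagonal.antidiagonal m, (p.1 : ℝ) * (al p.1 * al p.2) := by
      intro m
      have hswap : ∑ p ∈ Finset.HasAntidiagonal.antidiagonal m, (p.1 : ℝ) * (al p.1 * al p.2)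
          = ∑ p ∈ Finset.HasAntidiagonal.antidiagonal m, (p.2 : ℝ) * (al p.1 * al p.2) := by
        have h := Finset.Nat.sum_antidiagonal_swap (n := m)
          (f := fun p : ℕ × ℕ => (p.2 : ℝ) * (al p.2 * al p.1))
        simp only [Prod.snd_swap, Prod.fst_swap] at h
        rw [h]
        exact Finset.sum_congr rfl fun p _ => by ring
      calc (m:ℝ) * (∑ p ∈ Finset.HasAntidiagonal.antidiagonal m, al p.1 * al p.2)
          = ∑ p ∈ Finset.HasAntidiagonal.antidiagonal m, ((p.1:ℝ)+(p.2:ℝ)) * (al p.1 * al p.2) := by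
            rw [Finset.mul_sum]
            refine Finset.sum_congr rfl fun p hp => ?_
            have h := Finset.HasAntidiagonal.mem_antidiagonal.mp hp
            have h2 : (p.1:ℝ) + (p.2:ℝ) = m := by exact_mod_cast congrArg Nat.cast h
            rw [h2]
        _ = (∑ p ∈ Finset.HasAntidiagonal.antidiagonal m, (p.1:ℝ) * (al p.1 * al p.2))
            + ∑ p ∈ Finset.HasAntidiagonal.antidiagonal m, (p.2:ℝ) * (al p.1 * al p.2) := by
            rw [← Finset.sum_add_distrib]
            exact Finset.sum_congr rfl fun p _ => by ring
        _ = 2 * ∑ p ∈ Finset.HasAntidiagonal.antidiagonal m, (p.1:ℝ) * (al p.1 * al p.2) := by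
            rw [← hswap]; ring
    have step : ∑ p ∈ Finset.HasAntidiagonal.antidiagonal (n+1), (p.1 : ℝ) * (al p.1 * al p.2)
        = ∑ p ∈ Finset.HasAntidiagonal.antidiagonal n, ((p.1:ℝ)+1) * (al (p.1+1) * al p.2) := by
      rw [Finset.Nat.sum_antidiagonal_succ
        (f := fun p : ℕ × ℕ => (p.1 : ℝ) * (al p.1 * al p.2))]
      push_cast
      simp
    have step2 : ∀ p : ℕ × ℕ, 2 * (((p.1:ℝ)+1) * (al (p.1+1) * al p.2))
        = (2*(p.1:ℝ)+1) * (al p.1 * al p.2) := by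
      intro p
      have h := al_rec p.1
      calc 2*(((p.1:ℝ)+1) * (al (p.1+1) * al p.2))
          = (2*((p.1:ℝ)+1) * al (p.1+1)) * al p.2 := by ring
        _ = ((2*(p.1:ℝ)+1) * al p.1) * al p.2 := by rw [h]
        _ = (2*(p.1:ℝ)+1) * (al p.1 * al p.2) := by ring
    have key2 : ((n:ℝ)+1) * (∑ p ∈ Finset.HasAntidiagonal.antidiagonal (n+1), al p.1 * al p.2)
        = ((n:ℝ)+1) * ∑ p ∈ Finset.HasAntidiagonal.antidiagonal n, al p.1 * al p.2 := by
      have lhs1 := key (n+1)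
      push_cast at lhs1
      rw [lhs1, step]
      calc 2 * ∑ p ∈ Finset.HasAntidiagonal.antidiagonal n, ((p.1:ℝ)+1) * (al (p.1+1) * al p.2)
          = ∑ p ∈ Finset.HasAntidiagonal.antidiagonal n, (2*(p.1:ℝ)+1) * (al p.1 * al p.2) := by
            rw [Finset.mul_sum]
            exact Finset.sum_congr rfl fun p _ => step2 p
        _ = 2*(∑ p ∈ Finset.HasAntidiagonal.antidiagonal n, (p.1:ℝ) * (al p.1 * al p.2))
            + ∑ p ∈ Finset.HasAntidiagonal.antidiagonal n, al p.1 * al p.2 := by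
            rw [Finset.mul_sum, ← Finset.sum_add_distrib]
            exact Finset.sum_congr rfl fun p _ => by ring
        _ = (n:ℝ) * (∑ p ∈ Finset.HasAntidiagonal.antidiagonal n, al p.1 * al p.2)
            + ∑ p ∈ Finset.HasAntidiagonal.antidiagonal n, al p.1 * al p.2 := by rw [← key n]
        _ = ((n:ℝ)+1) * ∑ p ∈ Finset.HasAntidiagonal.antidiagonal n, al p.1 * al p.2 := by ring
    have hne : ((n:ℝ)+1) ≠ 0 := by positivity
    have h := mul_left_cancel₀ hne key2
    rw [h, ih]

noncomputable def FS (w : ℂ) : ℂ := ∑' n, (al n : ℂ) * w ^ n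

lemma summable_norm_FS {w : ℂ} (hw : ‖w‖ < 1) :
    Summable (fun n => ‖(al n : ℂ) * w ^ n‖) := by
  refine Summable.of_nonneg_of_le (fun n => norm_nonneg _) (fun n => ?_)
    (summable_geometric_of_lt_one (norm_nonneg w) hw)
  rw [norm_mul, norm_pow, Complex.norm_real, Real.norm_of_nonneg (al_nonneg n)]
  calc al n * ‖w‖ ^ n ≤ 1 * ‖w‖ ^ n := by
        exact mul_le_mul_of_nonneg_right (al_le_one n) (by positivity)
    _ = ‖w‖ ^ n := one_mul _

lemma hasSum_FS {w : ℂ} (hw : ‖w‖ < 1) :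
    HasSum (fun n => (al n : ℂ) * w ^ n) (FS w) :=
  ((summable_norm_FS hw).of_norm).hasSum

lemma FS_sq {w : ℂ} (hw : ‖w‖ < 1) : FS w * FS w = (1 - w)⁻¹ := by
  rw [FS, tsum_mul_tsum_eq_tsum_sum_antidiagonal_of_summable_norm
    (summable_norm_FS hw) (summable_norm_FS hw)]
  have h : ∀ n : ℕ, ∑ p ∈ Finset.HasAntidiagonal.antidiagonal n,
      ((al p.1 : ℂ) * w ^ p.1) * ((al p.2 : ℂ) * w ^ p.2) = w ^ n := by
    intro n
    have : ∀ p ∈ Finset.HasAntidiagonal.antidiagonal n,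
        ((al p.1 : ℂ) * w ^ p.1) * ((al p.2 : ℂ) * w ^ p.2)
          = ((al p.1 * al p.2 : ℝ) : ℂ) * w ^ n := by
      intro p hp
      have hpn : p.1 + p.2 = n := Finset.HasAntidiagonal.mem_antidiagonal.mp hp
      rw [← hpn]
      push_cast
      rw [pow_add]
      ring
    rw [Finset.sum_congr rfl this, ← Finset.sum_mul, ← Complex.ofReal_sum, conv n]
    simp
  rw [tsum_congr h, tsum_geometric_of_norm_lt_one hw]

lemma FS_conj (w : ℂ) : (starRingEnd ℂ) (FS w) = FS ((starRingEnd ℂ) w) := by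
  rw [show (starRingEnd ℂ) (FS w) = star (FS w) from rfl, FS, FS, tsum_star]
  exact tsum_congr fun n => by
    simp [map_mul, map_pow, Complex.conj_ofReal, RCLike.star_def]

set_option maxHeartbeats 1000000 in
lemma hasSum_point (x : ℝ) (hx0 : 0 ≤ x) (hx1 : x < 1) (θ : ℝ) :
    HasSum (fun p : ℕ × ℕ =>
        al p.1 * al p.2 * x ^ (p.1 + p.2) * Real.cos ((p.1 : ℝ) * θ - (p.2 : ℝ) * θ))
      (1 / Real.sqrt (1 + x ^ 2 - 2 * x * Real.cos θ)) := by
  set w : ℂ := (x : ℂ) * Complex.exp ((θ : ℂ) * Complex.I) with hwdef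
  have hnw : ‖w‖ = x := by
    rw [hwdef, norm_mul, Complex.norm_exp_ofReal_mul_I,
      mul_one, Complex.norm_real, Real.norm_of_nonneg hx0]
  have hw : ‖w‖ < 1 := by rw [hnw]; exact hx1
  have hw' : ‖(starRingEnd ℂ) w‖ < 1 := by rwa [RCLike.norm_conj]
  have h1 := hasSum_FS hw
  have h2 := hasSum_FS hw'
  have hmul : HasSum (fun p : ℕ × ℕ =>
      ((al p.1 : ℂ) * w ^ p.1) * ((al p.2 : ℂ) * ((starRingEnd ℂ) w) ^ p.2))
      (FS w * FS ((starRingEnd ℂ) w)) :=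
    HasSum.mul (f := fun a : ℕ => (al a : ℂ) * w ^ a)
      (g := fun b : ℕ => (al b : ℂ) * ((starRingEnd ℂ) w) ^ b) h1 h2
      (summable_mul_of_summable_norm (f := fun a : ℕ => (al a : ℂ) * w ^ a)
        (g := fun b : ℕ => (al b : ℂ) * ((starRingEnd ℂ) w) ^ b)
        (summable_norm_FS hw) (summable_norm_FS hw'))
  have hval : FS w * FS ((starRingEnd ℂ) w) = ((‖1 - w‖⁻¹ : ℝ) : ℂ) := by
    rw [← FS_conj, Complex.mul_conj]
    congr 1
    rw [← Complex.sq_norm, sq, ← norm_mul, FS_sq hw, norm_inv]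
  have hterm : ∀ p : ℕ × ℕ,
      ((al p.1 : ℂ) * w ^ p.1) * ((al p.2 : ℂ) * ((starRingEnd ℂ) w) ^ p.2)
      = ((al p.1 * al p.2 * x ^ (p.1 + p.2) : ℝ) : ℂ)
        * Complex.exp ((((p.1 : ℝ) * θ - (p.2 : ℝ) * θ : ℝ) : ℂ) * Complex.I) := by
    intro p
    have hcw : (starRingEnd ℂ) w = (x : ℂ) * Complex.exp (((-θ : ℝ) : ℂ) * Complex.I) := by
      rw [hwdef, map_mul, Complex.conj_ofReal, ← Complex.exp_conj]
      congr 2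
      simp [Complex.conj_ofReal]
    have hexp : Complex.exp ((p.1 : ℂ) * (((θ : ℝ) : ℂ) * Complex.I))
        * Complex.exp ((p.2 : ℂ) * (((-θ : ℝ) : ℂ) * Complex.I))
        = Complex.exp ((((p.1 : ℝ) * θ - (p.2 : ℝ) * θ : ℝ) : ℂ) * Complex.I) := by
      rw [← Complex.exp_add]
      congr 1
      push_cast
      ring
    rw [hcw, mul_pow, mul_pow, ← Complex.exp_nat_mul, ← Complex.exp_nat_mul]
    rw [← hexp]
    push_cast
    rw [pow_add]
    ring
  have hnrm : ‖1 - w‖ = Real.sqrt (1 + x ^ 2 - 2 * x * Real.cos θ) := by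
    rw [Complex.norm_def]
    congr 1
    rw [Complex.normSq_apply]
    simp only [hwdef, Complex.sub_re, Complex.sub_im, Complex.one_re, Complex.one_im,
      Complex.re_ofReal_mul, Complex.im_ofReal_mul, Complex.exp_ofReal_mul_I_re,
      Complex.exp_ofReal_mul_I_im]
    nlinarith [Real.sin_sq_add_cos_sq θ]
  rw [hval] at hmul
  have hre := hmul.mapL Complex.reCLM
  have hfun : (fun p : ℕ × ℕ => Complex.reCLM
      (((al p.1 : ℂ) * w ^ p.1) * ((al p.2 : ℂ) * ((starRingEnd ℂ) w) ^ p.2)))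
      = fun p : ℕ × ℕ =>
        al p.1 * al p.2 * x ^ (p.1 + p.2) * Real.cos ((p.1 : ℝ) * θ - (p.2 : ℝ) * θ) := by
    funext p
    rw [Complex.reCLM_apply, hterm p, Complex.re_ofReal_mul, Complex.exp_ofReal_mul_I_re]
  rw [hfun] at hre
  have hv2 : Complex.reCLM ((‖1 - w‖⁻¹ : ℝ) : ℂ)
      = 1 / Real.sqrt (1 + x ^ 2 - 2 * x * Real.cos θ) := by
    rw [Complex.reCLM_apply, Complex.ofReal_re, hnrm, one_div]
  rw [hv2] at hre
  exact hre

lemma int_cos (n : ℤ) : ∫ θ in (0:ℝ)..π, Real.cos (n * θ) = if n = 0 then π else 0 := by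
  rcases eq_or_ne n 0 with h | h
  · simp [h]
  · rw [if_neg h]
    have hc : (n : ℝ) ≠ 0 := Int.cast_ne_zero.2 h
    have h2 := intervalIntegral.integral_comp_mul_left (a := (0:ℝ)) (b := π)
      (f := Real.cos) hc
    rw [h2, mul_zero, integral_cos, Real.sin_zero,
      Real.sin_int_mul_pi, sub_zero, smul_eq_mul, mul_zero]

lemma cos_orth (k n : ℤ) : ∫ θ in (0:ℝ)..π, Real.cos (k * θ) * Real.cos (n * θ)
    = (if k = n then π else 0) / 2 + (if k = -n then π else 0) / 2 := by
  have hfun : ∀ θ : ℝ, Real.cos (k * θ) * Real.cos (n * θ)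
      = Real.cos (((k - n : ℤ) : ℝ) * θ) / 2 + Real.cos (((k + n : ℤ) : ℝ) * θ) / 2 := by
    intro θ
    have h := Real.two_mul_cos_mul_cos ((k : ℝ) * θ) ((n : ℝ) * θ)
    push_cast
    push_cast at h
    rw [sub_mul, add_mul]
    linarith [h]
  have hint : ∀ m : ℤ, IntervalIntegrable (fun θ : ℝ => Real.cos ((m : ℝ) * θ) / 2)
      MeasureTheory.volume 0 π := by
    intro m
    exact ((Real.continuous_cos.comp (continuous_const.mul continuous_id)).div_const 2
      ).intervalIntegrable 0 π
  rw [intervalIntegral.integral_congr (g := fun θ : ℝ =>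
      Real.cos (((k - n : ℤ) : ℝ) * θ) / 2 + Real.cos (((k + n : ℤ) : ℝ) * θ) / 2)
      (fun θ _ => hfun θ)]
  rw [intervalIntegral.integral_add (hint _) (hint _),
    intervalIntegral.integral_div, intervalIntegral.integral_div, int_cos, int_cos]
  congr 2
  · exact if_congr (by omega) rfl rfl
  · exact if_congr (by omega) rfl rfl

section main
variable {k : ℕ} {x : ℝ}

lemma summable_alx (hx0 : 0 ≤ x) (hx1 : x < 1) : Summable (fun a : ℕ => al a * x ^ a) := by
  refine Summable.of_nonneg_of_le
    (fun a => mul_nonneg (al_nonneg a) (pow_nonneg hx0 a)) (fun a => ?_)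
    (summable_geometric_of_lt_one hx0 hx1)
  calc al a * x ^ a ≤ 1 * x ^ a :=
        mul_le_mul_of_nonneg_right (al_le_one a) (by positivity)
    _ = x ^ a := one_mul _

lemma summable_bound (hx0 : 0 ≤ x) (hx1 : x < 1) :
    Summable (fun p : ℕ × ℕ => al p.1 * al p.2 * x ^ (p.1 + p.2)) := by
  have h := Summable.mul_of_nonneg (summable_alx hx0 hx1) (summable_alx hx0 hx1)
    (fun a => mul_nonneg (al_nonneg a) (by positivity))
    (fun a => mul_nonneg (al_nonneg a) (by positivity))
  refine h.congr fun p => ?_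
  rw [pow_add]; ring

lemma summable_L (hx0 : 0 ≤ x) (hx1 : x < 1) :
    Summable (fun m : ℕ => al m * al (m + k) * x ^ (2 * m + k)) := by
  have hx2 : x ^ 2 < 1 := by nlinarith
  refine Summable.of_nonneg_of_le
    (fun m => by
      have := al_nonneg m; have := al_nonneg (m + k); positivity)
    (fun m => ?_) (summable_geometric_of_lt_one (by positivity) hx2)
  have hxk : x ^ k ≤ 1 := pow_le_one₀ hx0 hx1.le
  have hA : (0:ℝ) ≤ (x ^ 2) ^ m := by positivity
  calc al m * al (m + k) * x ^ (2 * m + k)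
      ≤ 1 * 1 * ((x ^ 2) ^ m * x ^ k) := by
        rw [pow_add, pow_mul]
        gcongr
        any_goals first | exact al_le_one _ | exact al_nonneg _ | positivity
    _ ≤ (x ^ 2) ^ m := by nlinarith [pow_nonneg hx0 k]

lemma hasSum_gA (hx0 : 0 ≤ x) (hx1 : x < 1) :
    HasSum (fun p : ℕ × ℕ => al p.1 * al p.2 * x ^ (p.1 + p.2)
        * ((if (p.1 : ℤ) = (p.2 : ℤ) + k then π else 0) / 2))
      ((π / 2) * ∑' m : ℕ, al m * al (m + k) * x ^ (2 * m + k)) := by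
  set f := fun p : ℕ × ℕ => al p.1 * al p.2 * x ^ (p.1 + p.2)
    * ((if (p.1 : ℤ) = (p.2 : ℤ) + k then π else 0) / 2) with hf
  have he : Function.Injective (fun m : ℕ => ((m + k, m) : ℕ × ℕ)) := by
    intro a b h
    simpa using (Prod.ext_iff.1 h).2
  have hvan : ∀ p : ℕ × ℕ, p ∉ Set.range (fun m : ℕ => ((m + k, m) : ℕ × ℕ)) → f p = 0 := by
    intro p hp
    have hne : ¬ ((p.1 : ℤ) = (p.2 : ℤ) + k) := by
      intro h
      exact hp ⟨p.2, by
        have : p.1 = p.2 + k := by omega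
        exact Prod.ext this.symm rfl⟩
    simp [hf, hne]
  refine (he.hasSum_iff hvan).1 ?_
  have : (f ∘ fun m : ℕ => ((m + k, m) : ℕ × ℕ))
      = fun m : ℕ => (π / 2) * (al m * al (m + k) * x ^ (2 * m + k)) := by
    funext m
    have hc : ((m + k : ℕ) : ℤ) = (m : ℤ) + k := by push_cast; ring
    simp only [hf, Function.comp_apply, if_pos hc]
    rw [show m + k + m = 2 * m + k by ring]
    ring
  rw [this]
  exact (summable_L hx0 hx1).hasSum.mul_left _

lemma hasSum_gB (hx0 : 0 ≤ x) (hx1 : x < 1) :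
    HasSum (fun p : ℕ × ℕ => al p.1 * al p.2 * x ^ (p.1 + p.2)
        * ((if (p.2 : ℤ) = (p.1 : ℤ) + k then π else 0) / 2))
      ((π / 2) * ∑' m : ℕ, al m * al (m + k) * x ^ (2 * m + k)) := by
  set f := fun p : ℕ × ℕ => al p.1 * al p.2 * x ^ (p.1 + p.2)
    * ((if (p.2 : ℤ) = (p.1 : ℤ) + k then π else 0) / 2) with hf
  have he : Function.Injective (fun m : ℕ => ((m, m + k) : ℕ × ℕ)) := by
    intro a b h
    simpa using (Prod.ext_iff.1 h).1
  have hvan : ∀ p : ℕ × ℕ, p ∉ Set.range (fun m : ℕ => ((m, m + k) : ℕ × ℕ)) → f p = 0 := by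
    intro p hp
    have hne : ¬ ((p.2 : ℤ) = (p.1 : ℤ) + k) := by
      intro h
      exact hp ⟨p.1, by
        have : p.2 = p.1 + k := by omega
        exact Prod.ext rfl this.symm⟩
    simp [hf, hne]
  refine (he.hasSum_iff hvan).1 ?_
  have : (f ∘ fun m : ℕ => ((m, m + k) : ℕ × ℕ))
      = fun m : ℕ => (π / 2) * (al m * al (m + k) * x ^ (2 * m + k)) := by
    funext m
    have hc : ((m + k : ℕ) : ℤ) = (m : ℤ) + k := by push_cast; ring
    simp only [hf, Function.comp_apply, if_pos hc]
    rw [show m + (m + k) = 2 * m + k by ring]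
    ring
  rw [this]
  exact (summable_L hx0 hx1).hasSum.mul_left _

end main

theorem Xi1_series (k : ℕ) (x : ℝ) (hx0 : 0 ≤ x) (hx1 : x < 1) :
    Xi1 k x = (1 / 2) * ∑' m : ℕ,
      rising (1 / 2) m * rising (1 / 2) (m + k) /
        ((m.factorial : ℝ) * ((m + k).factorial : ℝ)) * x ^ (2 * m + k) := by
  have hL := summable_L (k := k) hx0 hx1
  set L := ∑' m : ℕ, al m * al (m + k) * x ^ (2 * m + k) with hLdef
  -- Step B : sum-integral exchange via dominated convergence
  have hB : HasSum (fun p : ℕ × ℕ => ∫ θ in Set.Ioc (0:ℝ) π,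
        Real.cos (k * θ) * (al p.1 * al p.2 * x ^ (p.1 + p.2)
          * Real.cos ((p.1 : ℝ) * θ - (p.2 : ℝ) * θ)))
      (∫ θ in Set.Ioc (0:ℝ) π,
        Real.cos (k * θ) / Real.sqrt (1 + x ^ 2 - 2 * x * Real.cos θ)) := by
    refine MeasureTheory.hasSum_integral_of_dominated_convergence
      (bound := fun p _ => al p.1 * al p.2 * x ^ (p.1 + p.2)) ?_ ?_ ?_ ?_ ?_
    · intro p
      exact Continuous.aestronglyMeasurable (by fun_prop)
    · intro p
      refine MeasureTheory.ae_of_all _ fun θ => ?_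
      have hCnn : 0 ≤ al p.1 * al p.2 * x ^ (p.1 + p.2) := by
        have := al_nonneg p.1; have := al_nonneg p.2; positivity
      have h1 := Real.abs_cos_le_one ((k : ℝ) * θ)
      have h2 := Real.abs_cos_le_one ((p.1 : ℝ) * θ - (p.2 : ℝ) * θ)
      have habs : ‖Real.cos (k * θ) * (al p.1 * al p.2 * x ^ (p.1 + p.2)
          * Real.cos ((p.1 : ℝ) * θ - (p.2 : ℝ) * θ))‖
          = |Real.cos ((k : ℝ) * θ)| * (al p.1 * al p.2 * x ^ (p.1 + p.2))
            * |Real.cos ((p.1 : ℝ) * θ - (p.2 : ℝ) * θ)| := by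
        rw [Real.norm_eq_abs, abs_mul, abs_mul, abs_of_nonneg hCnn]
        ring
      rw [habs]
      show _ ≤ al p.1 * al p.2 * x ^ (p.1 + p.2)
      have hstep : |Real.cos ((k : ℝ) * θ)| * (al p.1 * al p.2 * x ^ (p.1 + p.2))
          ≤ 1 * (al p.1 * al p.2 * x ^ (p.1 + p.2)) :=
        mul_le_mul_of_nonneg_right h1 hCnn
      have hstep2 : |Real.cos ((k : ℝ) * θ)| * (al p.1 * al p.2 * x ^ (p.1 + p.2))
            * |Real.cos ((p.1 : ℝ) * θ - (p.2 : ℝ) * θ)|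
          ≤ 1 * (al p.1 * al p.2 * x ^ (p.1 + p.2)) * 1 :=
        mul_le_mul hstep h2 (abs_nonneg _) (by linarith)
      linarith
    · exact MeasureTheory.ae_of_all _ fun θ => summable_bound hx0 hx1
    · exact MeasureTheory.integrableOn_const measure_Ioc_lt_top.ne
    · refine MeasureTheory.ae_of_all _ fun θ => ?_
      have h := (hasSum_point x hx0 hx1 θ).mul_left (Real.cos (k * θ))
      rw [mul_one_div] at h
      exact h
  -- Step C : compute each integral
  have hC : ∀ p : ℕ × ℕ, (∫ θ in Set.Ioc (0:ℝ) π,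
        Real.cos (k * θ) * (al p.1 * al p.2 * x ^ (p.1 + p.2)
          * Real.cos ((p.1 : ℝ) * θ - (p.2 : ℝ) * θ)))
      = al p.1 * al p.2 * x ^ (p.1 + p.2)
          * ((if (p.1 : ℤ) = (p.2 : ℤ) + k then π else 0) / 2)
        + al p.1 * al p.2 * x ^ (p.1 + p.2)
          * ((if (p.2 : ℤ) = (p.1 : ℤ) + k then π else 0) / 2) := by
    intro p
    rw [← intervalIntegral.integral_of_le Real.pi_pos.le]
    rw [intervalIntegral.integral_congr (g := fun θ : ℝ =>
        al p.1 * al p.2 * x ^ (p.1 + p.2)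
          * (Real.cos (((k : ℤ) : ℝ) * θ) * Real.cos ((((p.1 : ℤ) - (p.2 : ℤ)) : ℝ) * θ)))
      (fun θ _ => by push_cast; ring)]
    rw [intervalIntegral.integral_const_mul]
    have horth := cos_orth (k : ℤ) ((p.1 : ℤ) - (p.2 : ℤ))
    rw [show ((((p.1 : ℤ) - (p.2 : ℤ)) : ℤ) : ℝ) = ((p.1 : ℤ) : ℝ) - ((p.2 : ℤ) : ℝ) by
      push_cast; ring] at horth
    rw [horth]
    have e1 : ((k : ℤ) = (p.1 : ℤ) - (p.2 : ℤ)) = ((p.1 : ℤ) = (p.2 : ℤ) + k) :=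
      propext (by omega)
    have e2 : ((k : ℤ) = -((p.1 : ℤ) - (p.2 : ℤ))) = ((p.2 : ℤ) = (p.1 : ℤ) + k) :=
      propext (by omega)
    simp only [e1, e2]
    ring
  rw [funext hC] at hB
  have hD := (hasSum_gA (k := k) hx0 hx1).add (hasSum_gB (k := k) hx0 hx1)
  have hval := hB.unique hD
  have hrhs : (∑' m : ℕ, rising (1 / 2) m * rising (1 / 2) (m + k) /
      ((m.factorial : ℝ) * ((m + k).factorial : ℝ)) * x ^ (2 * m + k)) = L := by
    refine tsum_congr fun m => ?_
    simp only [al]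
    rw [div_mul_div_comm]
  unfold Xi1
  rw [intervalIntegral.integral_of_le Real.pi_pos.le, hval, hrhs]
  field_simp
  ring
end

section
/- For 0 ≤ x < 1 and nonnegative integer k, the functions Ξ₁^{[k]} satisfy the differential-difference relation (x d/dx + 1/2)(Ξ₁^{[k]}(x) + Ξ₁^{[k+2]}(x)) = ((1+x²) d/dx + x) Ξ₁^{[k+1]}(x). -/
open Real

noncomputable def Fint (k : ℕ) (x θ : ℝ) : ℝ :=
  Real.cos (k * θ) / Real.sqrt (1 + x ^ 2 - 2 * x * Real.cos θ)

noncomputable def Gint (k : ℕ) (x θ : ℝ) : ℝ :=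
  Real.cos (k * θ) * (Real.cos θ - x) /
    ((1 + x ^ 2 - 2 * x * Real.cos θ) * Real.sqrt (1 + x ^ 2 - 2 * x * Real.cos θ))

lemma Dpos {x : ℝ} (hx : |x| < 1) (θ : ℝ) : 0 < 1 + x ^ 2 - 2 * x * Real.cos θ := by
  have h1 : x * Real.cos θ ≤ |x| := by
    calc x * Real.cos θ ≤ |x * Real.cos θ| := le_abs_self _
      _ = |x| * |Real.cos θ| := abs_mul _ _
      _ ≤ |x| * 1 := by gcongr; exact Real.abs_cos_le_one θ
      _ = |x| := mul_one _
  have h2 : x ^ 2 = |x| ^ 2 := (sq_abs x).symm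
  nlinarith [abs_nonneg x, mul_pos (sub_pos.2 hx) (sub_pos.2 hx)]

lemma hasDerivAt_inner (a θ : ℝ) {x : ℝ} (hx : |x| < 1) :
    HasDerivAt (fun y : ℝ => a / Real.sqrt (1 + y ^ 2 - 2 * y * Real.cos θ))
      (a * (Real.cos θ - x) /
        ((1 + x ^ 2 - 2 * x * Real.cos θ) * Real.sqrt (1 + x ^ 2 - 2 * x * Real.cos θ))) x := by
  set c := Real.cos θ with hc
  have hD : 0 < 1 + x ^ 2 - 2 * x * c := Dpos hx θ
  have hu : HasDerivAt (fun y : ℝ => 1 + y ^ 2 - 2 * y * c) (2 * x - 2 * c) x := by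
    have h1 : HasDerivAt (fun y : ℝ => 1 + y ^ 2 - 2 * y * c)
        (0 + (2 : ℕ) * x ^ (2 - 1) - 2 * 1 * c) x :=
      ((hasDerivAt_const x (1:ℝ)).add (hasDerivAt_pow 2 x)).sub
        (((hasDerivAt_id x).const_mul 2).mul_const c)
    convert h1 using 1
    simp
  have hne : (1 + x ^ 2 - 2 * x * c) ≠ 0 := ne_of_gt hD
  have hs := hu.sqrt hne
  have hspos : 0 < Real.sqrt (1 + x ^ 2 - 2 * x * c) := Real.sqrt_pos.2 hD
  have h := (hasDerivAt_const x a).div hs (ne_of_gt hspos)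
  refine h.congr_deriv ?_
  set s := Real.sqrt (1 + x ^ 2 - 2 * x * c) with hsdef
  have hsq : s ^ 2 = 1 + x ^ 2 - 2 * x * c := Real.sq_sqrt hD.le
  rw [← hsq]
  have hs0 : s ≠ 0 := ne_of_gt hspos
  field_simp
  ring

lemma contF (k : ℕ) {x : ℝ} (hx : |x| < 1) : Continuous (Fint k x) := by
  apply Continuous.div
  · exact Real.continuous_cos.comp (continuous_const.mul continuous_id)
  · exact Real.continuous_sqrt.comp (by continuity)
  · intro θ
    exact ne_of_gt (Real.sqrt_pos.2 (Dpos hx θ))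

lemma contG (k : ℕ) {x : ℝ} (hx : |x| < 1) : Continuous (Gint k x) := by
  apply Continuous.div
  · exact (Real.continuous_cos.comp (continuous_const.mul continuous_id)).mul
      (Real.continuous_cos.sub continuous_const)
  · exact (by continuity : Continuous fun θ : ℝ => 1 + x ^ 2 - 2 * x * Real.cos θ).mul
      (Real.continuous_sqrt.comp (by continuity))
  · intro θ
    exact ne_of_gt (mul_pos (Dpos hx θ) (Real.sqrt_pos.2 (Dpos hx θ)))

lemma bound_est {r y : ℝ} (hr1 : r < 1) (hr0 : 0 ≤ r) (hy : |y| ≤ r) (a θ : ℝ)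
    (ha : |a| ≤ 1) :
    ‖a * (Real.cos θ - y) /
        ((1 + y ^ 2 - 2 * y * Real.cos θ) * Real.sqrt (1 + y ^ 2 - 2 * y * Real.cos θ))‖
      ≤ 2 / (1 - r) ^ 3 := by
  have hy1 : |y| < 1 := lt_of_le_of_lt hy hr1
  have hD : 0 < 1 + y ^ 2 - 2 * y * Real.cos θ := Dpos hy1 θ
  have hyc : y * Real.cos θ ≤ |y| := by
    calc y * Real.cos θ ≤ |y * Real.cos θ| := le_abs_self _
      _ = |y| * |Real.cos θ| := abs_mul _ _
      _ ≤ |y| * 1 := by gcongr; exact Real.abs_cos_le_one θ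
      _ = |y| := mul_one _
  have hy2 : y ^ 2 = |y| ^ 2 := (sq_abs y).symm
  have habs : 0 ≤ |y| := abs_nonneg y
  have hkey : 0 ≤ (r - |y|) * (2 - r - |y|) :=
    mul_nonneg (by linarith) (by linarith)
  have hD2 : (1 - r) ^ 2 ≤ 1 + y ^ 2 - 2 * y * Real.cos θ := by nlinarith
  have hsge : (1 - r) ≤ Real.sqrt (1 + y ^ 2 - 2 * y * Real.cos θ) := by
    have h := Real.sqrt_le_sqrt hD2
    rwa [Real.sqrt_sq (by linarith : (0:ℝ) ≤ 1 - r)] at h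
  have hspos : 0 < Real.sqrt (1 + y ^ 2 - 2 * y * Real.cos θ) := Real.sqrt_pos.2 hD
  have hden : (1 - r) ^ 3 ≤ (1 + y ^ 2 - 2 * y * Real.cos θ) *
      Real.sqrt (1 + y ^ 2 - 2 * y * Real.cos θ) := by
    have := mul_le_mul hD2 hsge (by linarith) hD.le
    nlinarith
  have hnum : |a * (Real.cos θ - y)| ≤ 2 := by
    rw [abs_mul]
    have h1 : |Real.cos θ - y| ≤ 2 := by
      have h2 : |Real.cos θ - y| ≤ |Real.cos θ| + |y| := abs_sub _ _
      have h3 := Real.abs_cos_le_one θ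
      linarith
    calc |a| * |Real.cos θ - y| ≤ 1 * 2 := by gcongr
      _ = 2 := one_mul 2
  have hdpos : (0:ℝ) < (1 - r) ^ 3 := pow_pos (by linarith) 3
  rw [Real.norm_eq_abs, abs_div,
    abs_of_pos (mul_pos hD hspos)]
  exact div_le_div₀ (by norm_num) hnum hdpos hden

lemma hasDerivAt_Xi1 (k : ℕ) {x : ℝ} (hx : |x| < 1) :
    HasDerivAt (Xi1 k) ((1 / (2 * π)) * ∫ θ in (0:ℝ)..π, Gint k x θ) x := by
  set r : ℝ := (1 + |x|) / 2 with hr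
  have habs : 0 ≤ |x| := abs_nonneg x
  have hr1 : r < 1 := by rw [hr]; linarith
  have hr0 : 0 ≤ r := by rw [hr]; linarith
  have hε : (0:ℝ) < (1 - |x|) / 2 := by linarith
  have hball : ∀ y ∈ Metric.ball x ((1 - |x|) / 2), |y| ≤ r := by
    intro y hy
    rw [Metric.mem_ball, Real.dist_eq] at hy
    have h1 : |y| ≤ |x| + |y - x| := by
      calc |y| = |x + (y - x)| := by ring_nf
        _ ≤ |x| + |y - x| := abs_add_le _ _
    rw [hr]; linarith
  have hmain := intervalIntegral.hasDerivAt_integral_of_dominated_loc_of_deriv_le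
    (F := fun y θ => Fint k y θ) (F' := fun y θ => Gint k y θ)
    (bound := fun _ => 2 / (1 - r) ^ 3) (a := (0:ℝ)) (b := π) (μ := MeasureTheory.volume)
    (Metric.ball_mem_nhds x hε)
    (Filter.eventually_of_mem (Metric.ball_mem_nhds x hε) fun y hy =>
      (contF k (lt_of_le_of_lt (hball y hy) hr1)).aestronglyMeasurable)
    ((contF k hx).intervalIntegrable _ _)
    ((contG k hx).aestronglyMeasurable)
    (MeasureTheory.ae_of_all _ fun θ _ y hy => by
      have hy' : |y| ≤ r := hball y hy
      exact bound_est hr1 hr0 hy' _ θ (Real.abs_cos_le_one _))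
    (intervalIntegrable_const)
    (MeasureTheory.ae_of_all _ fun θ _ y hy => by
      have hy1 : |y| < 1 := lt_of_le_of_lt (hball y hy) hr1
      exact hasDerivAt_inner (Real.cos (k * θ)) θ hy1)
  have h2 := hmain.2.const_mul (1 / (2 * π))
  exact h2

lemma pointwise (k : ℕ) {x : ℝ} (hx : |x| < 1) (θ : ℝ) :
    x * Gint k x θ + x * Gint (k + 2) x θ + (1 / 2) * Fint k x θ + (1 / 2) * Fint (k + 2) x θ
      = (1 + x ^ 2) * Gint (k + 1) x θ + x * Fint (k + 1) x θ := by
  simp only [Gint, Fint]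
  push_cast
  have hD : 0 < 1 + x ^ 2 - 2 * x * Real.cos θ := Dpos hx θ
  have hcos : Real.cos ((k : ℝ) * θ) =
      2 * Real.cos (((k : ℝ) + 1) * θ) * Real.cos θ - Real.cos (((k : ℝ) + 2) * θ) := by
    have h := Real.cos_add_cos ((k : ℝ) * θ) (((k : ℝ) + 2) * θ)
    have h1 : ((k : ℝ) * θ + ((k : ℝ) + 2) * θ) / 2 = ((k : ℝ) + 1) * θ := by ring
    have h2 : ((k : ℝ) * θ - ((k : ℝ) + 2) * θ) / 2 = -θ := by ring
    rw [h1, h2, Real.cos_neg] at h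
    linarith
  rw [hcos]
  set s := Real.sqrt (1 + x ^ 2 - 2 * x * Real.cos θ) with hsdef
  have hsq : s ^ 2 = 1 + x ^ 2 - 2 * x * Real.cos θ := Real.sq_sqrt hD.le
  have hs0 : s ≠ 0 := ne_of_gt (Real.sqrt_pos.2 hD)
  rw [← hsq]
  field_simp
  ring_nf
  linear_combination (2 * Real.cos ((k:ℝ) * θ + θ) * Real.cos θ
    - 2 * x * Real.cos ((k:ℝ) * θ + θ)) * hsq

theorem Xi1_diff_difference (k : ℕ) (x : ℝ) (hx0 : 0 ≤ x) (hx1 : x < 1) :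
    x * deriv (fun t : ℝ => Xi1 k t + Xi1 (k + 2) t) x
        + (1 / 2) * (Xi1 k x + Xi1 (k + 2) x) =
      (1 + x ^ 2) * deriv (Xi1 (k + 1)) x + x * Xi1 (k + 1) x := by
  have hx : |x| < 1 := by rw [abs_of_nonneg hx0]; exact hx1
  have hk := hasDerivAt_Xi1 k hx
  have hk1 := hasDerivAt_Xi1 (k + 1) hx
  have hk2 := hasDerivAt_Xi1 (k + 2) hx
  rw [(hk.fun_add hk2).deriv, hk1.deriv]
  have hGi : ∀ (j : ℕ) (c : ℝ),
      IntervalIntegrable (fun θ => c * Gint j x θ) MeasureTheory.volume 0 π :=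
    fun j c => (continuous_const.mul (contG j hx)).intervalIntegrable _ _
  have hFi : ∀ (j : ℕ) (c : ℝ),
      IntervalIntegrable (fun θ => c * Fint j x θ) MeasureTheory.volume 0 π :=
    fun j c => (continuous_const.mul (contF j hx)).intervalIntegrable _ _
  have key : x * (∫ θ in (0:ℝ)..π, Gint k x θ) + x * (∫ θ in (0:ℝ)..π, Gint (k + 2) x θ)
      + (1 / 2) * (∫ θ in (0:ℝ)..π, Fint k x θ)
      + (1 / 2) * (∫ θ in (0:ℝ)..π, Fint (k + 2) x θ)
      = (1 + x ^ 2) * (∫ θ in (0:ℝ)..π, Gint (k + 1) x θ)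
        + x * (∫ θ in (0:ℝ)..π, Fint (k + 1) x θ) := by
    rw [← intervalIntegral.integral_const_mul, ← intervalIntegral.integral_const_mul,
      ← intervalIntegral.integral_const_mul, ← intervalIntegral.integral_const_mul,
      ← intervalIntegral.integral_const_mul, ← intervalIntegral.integral_const_mul,
      ← intervalIntegral.integral_add (hGi k x) (hGi (k + 2) x),
      ← intervalIntegral.integral_add ((hGi k x).add (hGi (k + 2) x)) (hFi k (1/2)),
      ← intervalIntegral.integral_add (((hGi k x).add (hGi (k + 2) x)).add (hFi k (1/2)))
        (hFi (k + 2) (1/2)),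
      ← intervalIntegral.integral_add (hGi (k + 1) (1 + x ^ 2)) (hFi (k + 1) x)]
    exact intervalIntegral.integral_congr fun θ _ => pointwise k hx θ
  have hXi : ∀ j : ℕ, Xi1 j x = (1 / (2 * π)) * ∫ θ in (0:ℝ)..π, Fint j x θ := fun j => rfl
  rw [hXi k, hXi (k + 1), hXi (k + 2)]
  linear_combination (1 / (2 * π)) * key
end

section
/- For parameters a₁,a₂,a₃,b₁,b₂ and |y| < 1, with δ = y d/dy, the contiguous relation holds: [b₁b₂ + a₂(a₃−a₁)y + (b₂ + (a₃−a₁)y)δ] ₃F₂(a₁,a₂,a₃; b₁+1, b₂+1; y) = [a₂a₃(b₂−a₁+1)y/(b₂+1)] ₃F₂(a₁, a₂+1, a₃+1; b₁+1, b₂+2; y) + b₁b₂ ₃F₂(a₁, a₂, a₃−1; b₁, b₂; y). -/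
open Filter Topology

/-- Clausen's generalized hypergeometric series ₃F₂(a₁,a₂,a₃;b₁,b₂;y). -/
noncomputable def clausen3F2 (a₁ a₂ a₃ b₁ b₂ y : ℝ) : ℝ :=
  ∑' n : ℕ, rising a₁ n * rising a₂ n * rising a₃ n /
    (rising b₁ n * rising b₂ n * n.factorial) * y ^ n


namespace ClausenAux

lemma rising_zero (a : ℝ) : rising a 0 = 1 := by simp [rising]

lemma rising_succ (a : ℝ) (n : ℕ) : rising a (n+1) = rising a n * (a + n) :=
  ascPochhammer_succ_eval n a

lemma rising_succ' (a : ℝ) (n : ℕ) : rising a (n+1) = a * rising (a+1) n := by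
  induction n with
  | zero => simp [rising_succ, rising_zero]
  | succ n ih => rw [rising_succ, ih, rising_succ]; push_cast; ring

lemma rising_ne_zero {s : ℝ} (hs : ∀ m : ℕ, s ≠ -(m : ℝ)) (n : ℕ) : rising s n ≠ 0 := by
  induction n with
  | zero => simp [rising_zero]
  | succ n ih =>
    rw [rising_succ]
    refine mul_ne_zero ih fun h => hs n (by linarith)

noncomputable def coeff (p q r s t : ℝ) (n : ℕ) : ℝ :=
  rising p n * rising q n * rising r n / (rising s n * rising t n * n.factorial)

lemma coeff_zero (p q r s t : ℝ) : coeff p q r s t 0 = 1 := by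
  simp [coeff, rising_zero]

lemma coeff_succ (p q r s t : ℝ) (hs : ∀ m : ℕ, s ≠ -(m:ℝ)) (ht : ∀ m : ℕ, t ≠ -(m:ℝ)) (n : ℕ) :
    coeff p q r s t (n+1)
      = coeff p q r s t n * ((p+n)*(q+n)*(r+n)/((s+n)*(t+n)*(n+1))) := by
  have hsn := rising_ne_zero hs n
  have htn := rising_ne_zero ht n
  have hs1 : s + (n:ℝ) ≠ 0 := fun h => hs n (by linarith)
  have ht1 : t + (n:ℝ) ≠ 0 := fun h => ht n (by linarith)
  have hN : ((n.factorial : ℝ)) ≠ 0 := Nat.cast_ne_zero.2 n.factorial_ne_zero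
  have hn1 : ((n:ℝ)+1) ≠ 0 := by positivity
  simp only [coeff, rising_succ, Nat.factorial_succ]
  push_cast
  field_simp

lemma aux_div (x z : ℝ) : Tendsto (fun n : ℕ => (x + n)/(z + n)) atTop (𝓝 1) := by
  have hz : Tendsto (fun n : ℕ => z + (n:ℝ)) atTop atTop :=
    tendsto_atTop_add_const_left atTop z tendsto_natCast_atTop_atTop
  have h0 : Tendsto (fun n : ℕ => (x - z)/(z + (n:ℝ))) atTop (𝓝 0) :=
    Tendsto.div_atTop tendsto_const_nhds hz
  have h1 : Tendsto (fun n : ℕ => 1 + (x - z)/(z + (n:ℝ))) atTop (𝓝 1) := by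
    simpa using h0.const_add 1
  refine h1.congr' ?_
  filter_upwards [hz.eventually_gt_atTop 0] with n hn
  field_simp
  ring

lemma tendsto_ratio (p q r s t : ℝ) :
    Tendsto (fun n : ℕ => (p+n)*(q+n)*(r+n)/((s+n)*(t+n)*((n:ℝ)+1))) atTop (𝓝 1) := by
  have hs : Tendsto (fun n : ℕ => s + (n:ℝ)) atTop atTop :=
    tendsto_atTop_add_const_left atTop s tendsto_natCast_atTop_atTop
  have ht : Tendsto (fun n : ℕ => t + (n:ℝ)) atTop atTop :=
    tendsto_atTop_add_const_left atTop t tendsto_natCast_atTop_atTop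
  have h := ((aux_div p s).mul (aux_div q t)).mul (aux_div r 1)
  rw [show (1:ℝ)*1*1 = 1 by norm_num] at h
  refine h.congr' ?_
  filter_upwards [hs.eventually_gt_atTop 0, ht.eventually_gt_atTop 0] with n hsn htn
  have h1 : (1:ℝ) + n ≠ 0 := by positivity
  rw [div_mul_div_comm, div_mul_div_comm]
  congr 1 <;> ring

end ClausenAux

namespace ClausenAux

lemma summable_aux (p q r s t : ℝ) (hs : ∀ m : ℕ, s ≠ -(m:ℝ)) (ht : ∀ m : ℕ, t ≠ -(m:ℝ))
    {y : ℝ} (hy : |y| < 1) :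
    Summable (fun n : ℕ => ((n:ℝ)+1) * |coeff p q r s t n| * |y| ^ n) := by
  set f : ℕ → ℝ := fun n => ((n:ℝ)+1) * |coeff p q r s t n| * |y| ^ n with hf
  set ρ : ℕ → ℝ := fun n => ((n:ℝ)+2)/((n:ℝ)+1) *
    |(p+n)*(q+n)*(r+n)/((s+n)*(t+n)*((n:ℝ)+1))| * |y| with hρ
  have hρlim : Tendsto ρ atTop (𝓝 (|y|)) := by
    have h1 : Tendsto (fun n : ℕ => ((n:ℝ)+2)/((n:ℝ)+1)) atTop (𝓝 1) := by
      have := aux_div 2 1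
      refine this.congr fun n => by ring_nf
    have h2 := (tendsto_ratio p q r s t).abs
    rw [abs_one] at h2
    have := (h1.mul h2).mul (tendsto_const_nhds (x := |y|))
    simpa using this
  have hfrec : ∀ n : ℕ, f (n+1) = f n * ρ n := by
    intro n
    have hc := coeff_succ p q r s t hs ht n
    have hn1 : ((n:ℝ)+1) ≠ 0 := by positivity
    simp only [hf, hρ, hc, abs_mul, pow_succ]
    push_cast
    field_simp
    ring
  set r' : ℝ := (1 + |y|)/2 with hr'
  have hr1 : r' < 1 := by rw [hr']; linarith
  have hyr : |y| < r' := by rw [hr']; linarith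
  apply summable_of_ratio_norm_eventually_le hr1
  filter_upwards [hρlim.eventually_lt_const hyr] with n hn
  have hfn : 0 ≤ f n := by simp only [hf]; positivity
  have hρn : 0 ≤ ρ n := by simp only [hρ]; positivity
  rw [Real.norm_eq_abs, Real.norm_eq_abs, abs_of_nonneg hfn,
    abs_of_nonneg (by rw [hfrec n]; exact mul_nonneg hfn hρn), hfrec n]
  calc f n * ρ n ≤ f n * r' := by
        exact mul_le_mul_of_nonneg_left (le_of_lt hn) hfn
    _ = r' * f n := mul_comm _ _

lemma summable_coeff (p q r s t : ℝ) (hs : ∀ m : ℕ, s ≠ -(m:ℝ)) (ht : ∀ m : ℕ, t ≠ -(m:ℝ))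
    {y : ℝ} (hy : |y| < 1) :
    Summable (fun n : ℕ => coeff p q r s t n * y ^ n) := by
  refine Summable.of_norm_bounded (summable_aux p q r s t hs ht hy) fun n => ?_
  rw [Real.norm_eq_abs, abs_mul, abs_pow]
  have h1 : (1:ℝ) ≤ (n:ℝ)+1 := by have : (0:ℝ) ≤ n := Nat.cast_nonneg n; linarith
  nlinarith [abs_nonneg (coeff p q r s t n), pow_nonneg (abs_nonneg y) n,
    mul_nonneg (abs_nonneg (coeff p q r s t n)) (pow_nonneg (abs_nonneg y) n)]

lemma summable_ncoeff (p q r s t : ℝ) (hs : ∀ m : ℕ, s ≠ -(m:ℝ)) (ht : ∀ m : ℕ, t ≠ -(m:ℝ))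
    {y : ℝ} (hy : |y| < 1) :
    Summable (fun n : ℕ => (n:ℝ) * coeff p q r s t n * y ^ n) := by
  refine Summable.of_norm_bounded (summable_aux p q r s t hs ht hy) fun n => ?_
  rw [Real.norm_eq_abs, abs_mul, abs_mul, abs_pow, Nat.abs_cast]
  have h1 : (n:ℝ) ≤ (n:ℝ)+1 := by linarith
  have := mul_nonneg (abs_nonneg (coeff p q r s t n)) (pow_nonneg (abs_nonneg y) n)
  nlinarith

end ClausenAux

namespace ClausenAux

lemma hasDerivAt_tsum_coeff (p q r s t : ℝ) (hs : ∀ m : ℕ, s ≠ -(m:ℝ)) (ht : ∀ m : ℕ, t ≠ -(m:ℝ))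
    {y : ℝ} (hy : |y| < 1) :
    HasDerivAt (fun x : ℝ => ∑' n : ℕ, coeff p q r s t n * x ^ n)
      (∑' n : ℕ, coeff p q r s t n * ((n:ℝ) * y ^ (n-1))) y := by
  set c := coeff p q r s t with hc
  set r' : ℝ := (1 + |y|)/2 with hr'
  have hy0 : 0 ≤ |y| := abs_nonneg y
  have hr0 : 0 < r' := by rw [hr']; linarith
  have hr1 : r' < 1 := by rw [hr']; linarith
  have hyr : |y| < r' := by rw [hr']; linarith
  have hrabs : |r'| < 1 := by rw [abs_of_pos hr0]; exact hr1
  set u : ℕ → ℝ := fun n => ((n:ℝ)+1) * |c n| * r' ^ n / r' with hu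
  have hU : Summable u := by
    have := summable_aux p q r s t hs ht hrabs
    rw [abs_of_pos hr0] at this
    exact this.div_const r'
  have hbound : ∀ n : ℕ, ∀ x ∈ Metric.ball (0:ℝ) r',
      ‖c n * ((n:ℝ) * x ^ (n-1))‖ ≤ u n := by
    intro n x hx
    have hxr : |x| < r' := by simpa [Real.dist_eq] using hx
    rw [Real.norm_eq_abs, abs_mul, abs_mul, abs_pow, Nat.abs_cast]
    match n with
    | 0 => simp only [Nat.cast_zero, zero_mul, mul_zero]; rw [hu]; positivity
    | (m+1) =>
      have h1 : |x| ^ (m+1-1) ≤ r' ^ m :=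
        pow_le_pow_left₀ (abs_nonneg x) (le_of_lt hxr) m
      have hum : u (m+1) = ((m:ℝ)+2) * |c (m+1)| * r' ^ m := by
        rw [hu]
        push_cast
        field_simp
        ring
      rw [hum]
      have h2 : ((m:ℝ)+1) ≤ (m:ℝ)+2 := by linarith
      have hcn : 0 ≤ |c (m+1)| := abs_nonneg _
      have hrm : (0:ℝ) ≤ r' ^ m := by positivity
      push_cast
      calc |c (m+1)| * (((m:ℝ)+1) * |x| ^ (m+1-1))
          = ((m:ℝ)+1) * |c (m+1)| * |x| ^ (m+1-1) := by ring
        _ ≤ ((m:ℝ)+1) * |c (m+1)| * r' ^ m := by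
            exact mul_le_mul_of_nonneg_left h1 (by positivity)
        _ ≤ ((m:ℝ)+2) * |c (m+1)| * r' ^ m := by
            exact mul_le_mul_of_nonneg_right (by nlinarith) hrm
  have hF' := tendstoUniformlyOn_tsum hU hbound
  have hderiv : ∀ᶠ N : Finset ℕ in atTop, ∀ x ∈ Metric.ball (0:ℝ) r',
      HasDerivAt (fun x : ℝ => ∑ n ∈ N, c n * x ^ n) (∑ n ∈ N, c n * ((n:ℝ) * x ^ (n-1))) x := by
    refine Filter.Eventually.of_forall fun N x _ => ?_
    exact HasDerivAt.fun_sum fun n _ => (hasDerivAt_pow n x).const_mul (c n)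
  have hsum : ∀ x ∈ Metric.ball (0:ℝ) r',
      Tendsto (fun N : Finset ℕ => ∑ n ∈ N, c n * x ^ n) atTop
        (𝓝 (∑' n : ℕ, c n * x ^ n)) := by
    intro x hx
    have hxr : |x| < r' := by simpa [Real.dist_eq] using hx
    exact (summable_coeff p q r s t hs ht (lt_trans hxr hr1)).hasSum
  have hmem : y ∈ Metric.ball (0:ℝ) r' := by simpa [Real.dist_eq] using hyr
  exact hasDerivAt_of_tendstoUniformlyOn Metric.isOpen_ball hF' hderiv hsum hmem

end ClausenAux


namespace ClausenAux

lemma eK (a₁ a₂ a₃ b₁ b₂ : ℝ)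
    (hb₁' : ∀ m : ℕ, b₁ + 1 ≠ -(m : ℝ)) (hb₂' : ∀ m : ℕ, b₂ + 1 ≠ -(m : ℝ))
    (hb₂'' : ∀ m : ℕ, b₂ + 2 ≠ -(m : ℝ)) (n : ℕ) :
    a₂*a₃*(b₂-a₁+1)/(b₂+1) * coeff a₁ (a₂+1) (a₃+1) (b₁+1) (b₂+2) n
      = (b₂-a₁+1)*(a₂+n)*(a₃+n)/(b₂+1+n) * coeff a₁ a₂ a₃ (b₁+1) (b₂+1) n := by
  have hB : a₂ * rising (a₂+1) n = rising a₂ n * (a₂ + n) :=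
    (rising_succ' a₂ n).symm.trans (rising_succ a₂ n)
  have hC : a₃ * rising (a₃+1) n = rising a₃ n * (a₃ + n) :=
    (rising_succ' a₃ n).symm.trans (rising_succ a₃ n)
  have hQ : (b₂+1) * rising (b₂+2) n = rising (b₂+1) n * (b₂ + 1 + n) := by
    have := (rising_succ' (b₂+1) n).symm.trans (rising_succ (b₂+1) n)
    rwa [show b₂+1+1 = b₂+2 by ring] at this
  have hP0 : rising (b₁+1) n ≠ 0 := rising_ne_zero hb₁' n
  have hQ0 : rising (b₂+1) n ≠ 0 := rising_ne_zero hb₂' n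
  have hQ'0 : rising (b₂+2) n ≠ 0 := rising_ne_zero hb₂'' n
  have hN0 : ((n.factorial : ℝ)) ≠ 0 := Nat.cast_ne_zero.2 n.factorial_ne_zero
  have hv₂ : b₂ + 1 + (n:ℝ) ≠ 0 := fun h => hb₂' n (by linarith)
  have hb₂1 : b₂ + 1 ≠ 0 := fun h => hb₂' 0 (by simp; linarith)
  have hprod : (a₂ * rising (a₂+1) n) * ((a₃ * rising (a₃+1) n) * (rising (b₂+1) n * (b₂ + 1 + n)))
      = (rising a₂ n * (a₂ + n)) * ((rising a₃ n * (a₃ + n)) * ((b₂+1) * rising (b₂+2) n)) := by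
    rw [hB, hC, ← hQ]
  simp only [coeff]
  rw [div_mul_div_comm, div_mul_div_comm, div_eq_div_iff
    (mul_ne_zero hb₂1 (mul_ne_zero (mul_ne_zero hP0 hQ'0) hN0))
    (mul_ne_zero hv₂ (mul_ne_zero (mul_ne_zero hP0 hQ0) hN0))]
  linear_combination ((b₂-a₁+1) * rising a₁ n * rising (b₁+1) n * (n.factorial : ℝ)) * hprod

lemma eF (a₁ a₂ a₃ b₁ b₂ : ℝ)
    (hb₁ : ∀ m : ℕ, b₁ ≠ -(m : ℝ)) (hb₂ : ∀ m : ℕ, b₂ ≠ -(m : ℝ)) (n : ℕ) :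
    coeff a₁ a₂ (a₃-1) b₁ b₂ (n+1)
      = coeff a₁ a₂ a₃ (b₁+1) (b₂+1) n * ((a₁+n)*(a₂+n)*(a₃-1)/(b₁*b₂*((n:ℝ)+1))) := by
  have e1 : rising (a₃-1) (n+1) = (a₃-1) * rising a₃ n := by
    rw [rising_succ', sub_add_cancel]
  have e2 : rising b₁ (n+1) = b₁ * rising (b₁+1) n := rising_succ' b₁ n
  have e3 : rising b₂ (n+1) = b₂ * rising (b₂+1) n := rising_succ' b₂ n
  have hb₁0 : b₁ ≠ 0 := fun h => hb₁ 0 (by simp [h])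
  have hb₂0 : b₂ ≠ 0 := fun h => hb₂ 0 (by simp [h])
  have hN0 : ((n.factorial : ℝ)) ≠ 0 := Nat.cast_ne_zero.2 n.factorial_ne_zero
  have hn1 : ((n:ℝ)+1) ≠ 0 := by positivity
  simp only [coeff, rising_succ a₁, rising_succ a₂, e1, e2, e3, Nat.factorial_succ]
  push_cast
  field_simp

set_option maxHeartbeats 1000000 in
lemma key (a₁ a₂ a₃ b₁ b₂ : ℝ)
    (hb₁ : ∀ m : ℕ, b₁ ≠ -(m : ℝ)) (hb₂ : ∀ m : ℕ, b₂ ≠ -(m : ℝ))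
    (hb₁' : ∀ m : ℕ, b₁ + 1 ≠ -(m : ℝ)) (hb₂' : ∀ m : ℕ, b₂ + 1 ≠ -(m : ℝ))
    (hb₂'' : ∀ m : ℕ, b₂ + 2 ≠ -(m : ℝ)) (n : ℕ) :
    (b₁*b₂ + ((n:ℝ)+1)*b₂) * coeff a₁ a₂ a₃ (b₁+1) (b₂+1) (n+1)
      + (a₂+(n:ℝ))*(a₃-a₁) * coeff a₁ a₂ a₃ (b₁+1) (b₂+1) n
    = a₂*a₃*(b₂-a₁+1)/(b₂+1) * coeff a₁ (a₂+1) (a₃+1) (b₁+1) (b₂+2) n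
      + b₁*b₂ * coeff a₁ a₂ (a₃-1) b₁ b₂ (n+1) := by
  rw [coeff_succ a₁ a₂ a₃ (b₁+1) (b₂+1) hb₁' hb₂' n, eK a₁ a₂ a₃ b₁ b₂ hb₁' hb₂' hb₂'' n,
    eF a₁ a₂ a₃ b₁ b₂ hb₁ hb₂ n]
  have hv₁ : b₁ + 1 + (n:ℝ) ≠ 0 := fun h => hb₁' n (by linarith)
  have hv₂ : b₂ + 1 + (n:ℝ) ≠ 0 := fun h => hb₂' n (by linarith)
  have hb₁0 : b₁ ≠ 0 := fun h => hb₁ 0 (by simp [h])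
  have hb₂0 : b₂ ≠ 0 := fun h => hb₂ 0 (by simp [h])
  have hn1 : ((n:ℝ)+1) ≠ 0 := by positivity
  field_simp
  ring

end ClausenAux

namespace ClausenAux

lemma hasSum_shift {g : ℕ → ℝ} {σ : ℝ} (h : HasSum g σ) :
    HasSum (fun n : ℕ => Nat.rec (motive := fun _ => ℝ) 0 (fun k _ => g k) n) σ := by
  refine (Function.Injective.hasSum_iff Nat.succ_injective ?_).1 h
  intro x hx
  cases x with
  | zero => rfl
  | succ k => exact absurd ⟨k, rfl⟩ hx

end ClausenAux


open ClausenAux in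
theorem clausen3F2_contiguous (a₁ a₂ a₃ b₁ b₂ : ℝ)
    (hb₁ : ∀ m : ℕ, b₁ ≠ -(m : ℝ)) (hb₂ : ∀ m : ℕ, b₂ ≠ -(m : ℝ))
    (hb₁' : ∀ m : ℕ, b₁ + 1 ≠ -(m : ℝ)) (hb₂' : ∀ m : ℕ, b₂ + 1 ≠ -(m : ℝ))
    (hb₂'' : ∀ m : ℕ, b₂ + 2 ≠ -(m : ℝ))
    (y : ℝ) (hy : |y| < 1) :
    (b₁ * b₂ + a₂ * (a₃ - a₁) * y) * clausen3F2 a₁ a₂ a₃ (b₁ + 1) (b₂ + 1) y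
        + (b₂ + (a₃ - a₁) * y) *
          (y * deriv (fun t : ℝ => clausen3F2 a₁ a₂ a₃ (b₁ + 1) (b₂ + 1) t) y) =
      a₂ * a₃ * (b₂ - a₁ + 1) * y / (b₂ + 1) *
          clausen3F2 a₁ (a₂ + 1) (a₃ + 1) (b₁ + 1) (b₂ + 2) y
        + b₁ * b₂ * clausen3F2 a₁ a₂ (a₃ - 1) b₁ b₂ y := by
  have hclausen : ∀ p q r s t x : ℝ, clausen3F2 p q r s t x
      = ∑' n : ℕ, coeff p q r s t n * x ^ n := fun _ _ _ _ _ _ => rfl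
  -- derivative computation
  have hder : deriv (fun t : ℝ => clausen3F2 a₁ a₂ a₃ (b₁ + 1) (b₂ + 1) t) y
      = ∑' n : ℕ, coeff a₁ a₂ a₃ (b₁+1) (b₂+1) n * ((n:ℝ) * y ^ (n-1)) := by
    have h := hasDerivAt_tsum_coeff a₁ a₂ a₃ (b₁+1) (b₂+1) hb₁' hb₂' hy
    have heq : (fun t : ℝ => clausen3F2 a₁ a₂ a₃ (b₁ + 1) (b₂ + 1) t)
        = fun x : ℝ => ∑' n : ℕ, coeff a₁ a₂ a₃ (b₁+1) (b₂+1) n * x ^ n :=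
      funext fun x => hclausen _ _ _ _ _ x
    rw [heq]
    exact h.deriv
  have hyT : y * (∑' n : ℕ, coeff a₁ a₂ a₃ (b₁+1) (b₂+1) n * ((n:ℝ) * y ^ (n-1)))
      = ∑' n : ℕ, (n:ℝ) * coeff a₁ a₂ a₃ (b₁+1) (b₂+1) n * y ^ n := by
    rw [← tsum_mul_left]
    refine tsum_congr fun n => ?_
    cases n with
    | zero => simp
    | succ m => rw [Nat.add_sub_cancel]; push_cast; ring
  rw [hder, hyT]
  -- HasSum facts
  have hd : HasSum (fun n : ℕ => coeff a₁ a₂ a₃ (b₁+1) (b₂+1) n * y ^ n)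
      (clausen3F2 a₁ a₂ a₃ (b₁ + 1) (b₂ + 1) y) := by
    rw [hclausen]
    exact (summable_coeff a₁ a₂ a₃ (b₁+1) (b₂+1) hb₁' hb₂' hy).hasSum
  have hT : HasSum (fun n : ℕ => (n:ℝ) * coeff a₁ a₂ a₃ (b₁+1) (b₂+1) n * y ^ n)
      (∑' n : ℕ, (n:ℝ) * coeff a₁ a₂ a₃ (b₁+1) (b₂+1) n * y ^ n) :=
    (summable_ncoeff a₁ a₂ a₃ (b₁+1) (b₂+1) hb₁' hb₂' hy).hasSum
  have he : HasSum (fun n : ℕ => coeff a₁ (a₂+1) (a₃+1) (b₁+1) (b₂+2) n * y ^ n)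
      (clausen3F2 a₁ (a₂ + 1) (a₃ + 1) (b₁ + 1) (b₂ + 2) y) := by
    rw [hclausen]
    exact (summable_coeff a₁ (a₂+1) (a₃+1) (b₁+1) (b₂+2) hb₁' hb₂'' hy).hasSum
  have hf : HasSum (fun n : ℕ => coeff a₁ a₂ (a₃-1) b₁ b₂ n * y ^ n)
      (clausen3F2 a₁ a₂ (a₃ - 1) b₁ b₂ y) := by
    rw [hclausen]
    exact (summable_coeff a₁ a₂ (a₃-1) b₁ b₂ hb₁ hb₂ hy).hasSum
  -- combined sums
  have hRn := (hd.mul_left (b₁*b₂)).add (hT.mul_left b₂)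
  have hSn := ((hd.mul_left a₂).add hT).mul_left ((a₃-a₁)*y)
  have hS' := hasSum_shift hSn
  have hKe := he.mul_left (a₂*a₃*(b₂-a₁+1)/(b₂+1)*y)
  have hKe' := hasSum_shift hKe
  have hfb := hf.mul_left (b₁*b₂)
  have hLtot := hRn.add hS'
  have hRtot := hfb.add hKe'
  have hpt : ∀ n : ℕ,
      (b₁*b₂ * (coeff a₁ a₂ a₃ (b₁+1) (b₂+1) n * y ^ n)
        + b₂ * ((n:ℝ) * coeff a₁ a₂ a₃ (b₁+1) (b₂+1) n * y ^ n))
      + (Nat.rec (motive := fun _ => ℝ) 0 (fun k _ => (a₃-a₁)*y *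
          (a₂ * (coeff a₁ a₂ a₃ (b₁+1) (b₂+1) k * y ^ k)
            + (k:ℝ) * coeff a₁ a₂ a₃ (b₁+1) (b₂+1) k * y ^ k)) n)
      = b₁*b₂ * (coeff a₁ a₂ (a₃-1) b₁ b₂ n * y ^ n)
      + (Nat.rec (motive := fun _ => ℝ) 0 (fun k _ => a₂*a₃*(b₂-a₁+1)/(b₂+1)*y *
          (coeff a₁ (a₂+1) (a₃+1) (b₁+1) (b₂+2) k * y ^ k)) n) := by
    intro n
    cases n with
    | zero => simp [coeff_zero]
    | succ k =>
      have hk := key a₁ a₂ a₃ b₁ b₂ hb₁ hb₂ hb₁' hb₂' hb₂'' k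
      show _ + (a₃-a₁)*y * _ = _ + a₂*a₃*(b₂-a₁+1)/(b₂+1)*y * _
      push_cast
      linear_combination (y^(k+1)) * hk
  have hSig := (funext hpt : _ = _) ▸ hLtot
  have hfinal := hSig.unique hRtot
  linear_combination hfinal
end
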